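/- If a transition sequence of the arc-eager system reaches a final configuration (empty buffer, stack containing only the root), then the constructed arc set Σ is a spanning arborescence on the words rooted at the artificial root: every non-root word has exactly one head and the arc relation is acyclic and connected. -/

import Mathlib

/-- A configuration of the arc-eager transition system: a stack `S` of word
indices (top at the head), a buffer `B` of word indices (front at the head),
and a set `A` of arcs `(head, dependent)`. -/
structure Config where
  S : List ℕ
  B : List ℕ
  A : Set (ℕ × ℕ)

/-- The four arc-eager transitions. -/
inductive Step : Config → Config → Prop
  | shift (S : List ℕ) (b : ℕ) (B : List ℕ) (A : Set (ℕ × ℕ)) :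
      Step ⟨S, b :: B, A⟩ ⟨b :: S, B, A⟩
  | rightArc (s : ℕ) (S : List ℕ) (b : ℕ) (B : List ℕ) (A : Set (ℕ × ℕ)) :
      Step ⟨s :: S, b :: B, A⟩ ⟨b :: s :: S, B, insert (s, b) A⟩
  | leftArc (s : ℕ) (S : List ℕ) (b : ℕ) (B : List ℕ) (A : Set (ℕ × ℕ))
      (hroot : s ≠ 0) (hhead : ∀ k, (k, s) ∉ A) :
      Step ⟨s :: S, b :: B, A⟩ ⟨S, b :: B, insert (b, s) A⟩
  | reduce (s : ℕ) (S : List ℕ) (B : List ℕ) (A : Set (ℕ × ℕ))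
      (hhead : ∃ k, (k, s) ∈ A) :
      Step ⟨s :: S, B, A⟩ ⟨S, B, A⟩

/-- Initial configuration for a sentence with words indexed `1, …, n`. -/
def Init (n : ℕ) : Config := ⟨[], (List.range n).map (· + 1), ∅⟩

structure AEInv (n : ℕ) (c : Config) : Prop where
  bound : ∀ e ∈ c.A, e.1 ≤ n ∧ e.2 ≤ n
  sbBound : ∀ x ∈ c.S ++ c.B, x ≤ n
  nodup : (c.S ++ c.B).Nodup
  uniq : ∀ d h h', (h, d) ∈ c.A → (h', d) ∈ c.A → h = h'
  bufNoHead : ∀ d ∈ c.B, ∀ h, (h, d) ∉ c.A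
  rootNoHead : ∀ h, (h, 0) ∉ c.A
  rootBuf : 0 ∉ c.B ∨ (c.S = [] ∧ ∃ B', c.B = 0 :: B')
  db : ∀ h x, (h, x) ∈ c.A → ∀ l1 l2, c.S = l1 ++ x :: l2 → ∃ l2', l2 = h :: l2'
  good : ∀ d, d ≤ n → ∃ a ∈ c.S ++ c.B,
    Relation.ReflTransGen (fun x y => (x, y) ∈ c.A) a d

lemma inv_step {n : ℕ} {c c' : Config} (hI : AEInv n c) (hs : Step c c') : AEInv n c' := by
  cases hs with
  | shift S b B A =>
    obtain ⟨bound, sbBound, nodup, uniq, bufNoHead, rootNoHead, rootBuf, db, good⟩ := hI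
    simp only at *
    have hperm : (S ++ b :: B).Perm (b :: S ++ B) := List.perm_middle
    refine ⟨bound, ?_, hperm.nodup nodup, uniq, fun d hd => bufNoHead d (by simp [hd]), rootNoHead, ?_, ?_, ?_⟩
    · intro x hx; exact sbBound x (hperm.mem_iff.mpr hx)
    · left; intro h0
      rcases rootBuf with hrb | ⟨hS, B', hB'⟩
      · exact hrb (by simp [h0])
      · obtain ⟨hb0, hBB'⟩ := List.cons.inj hB'
        have hnd : (b :: B).Nodup := by
          have := nodup; rw [hS] at this; simpa using this
        rw [hb0] at hnd
        exact (List.nodup_cons.mp hnd).1 h0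
    · intro h x hx l1 l2 hl
      cases l1 with
      | nil =>
        obtain ⟨hx1, _⟩ := List.cons.inj hl
        exact absurd hx (bufNoHead x (by simp [hx1]) h)
      | cons a l1' =>
        obtain ⟨_, hl2⟩ := List.cons.inj hl
        exact db h x hx l1' l2 hl2
    · intro d hd
      obtain ⟨a, ha, hp⟩ := good d hd
      exact ⟨a, hperm.mem_iff.mp ha, hp⟩
  | rightArc s S b B A =>
    obtain ⟨bound, sbBound, nodup, uniq, bufNoHead, rootNoHead, rootBuf, db, good⟩ := hI
    simp only at *
    have hrb : 0 ∉ b :: B := by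
      rcases rootBuf with hh | ⟨hS, _⟩
      · exact hh
      · exact absurd hS (by simp)
    have hbne : b ≠ 0 := fun hh => hrb (by simp [hh])
    have hbnotS : b ∉ s :: S := by
      intro hmem
      rw [List.nodup_append] at nodup
      exact nodup.2.2 b hmem b (by simp) rfl
    have hbnotB : b ∉ B := by
      have hnd : (b :: B).Nodup := (List.nodup_append.mp nodup).2.1
      exact (List.nodup_cons.mp hnd).1
    have hperm : ((s :: S) ++ b :: B).Perm (b :: (s :: S) ++ B) := List.perm_middle
    refine ⟨?_, ?_, hperm.nodup nodup, ?_, ?_, ?_, ?_, ?_, ?_⟩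
    · rintro ⟨hh, dd⟩ he
      rcases Set.mem_insert_iff.mp he with he | he
      · simp only [Prod.mk.injEq] at he
        obtain ⟨rfl, rfl⟩ := he
        exact ⟨sbBound hh (by simp), sbBound dd (by simp)⟩
      · exact bound _ he
    · intro x hx; exact sbBound x (hperm.mem_iff.mpr hx)
    · intro d hh hh' h1 h2
      rcases Set.mem_insert_iff.mp h1 with h1 | h1 <;>
        rcases Set.mem_insert_iff.mp h2 with h2 | h2
      · simp only [Prod.mk.injEq] at h1 h2; omega
      · simp only [Prod.mk.injEq] at h1
        exact absurd (h1.2 ▸ h2) (bufNoHead d (by simp [h1.2]) hh')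
      · simp only [Prod.mk.injEq] at h2
        exact absurd (h2.2 ▸ h1) (bufNoHead d (by simp [h2.2]) hh)
      · exact uniq d hh hh' h1 h2
    · intro d hd hh hmem
      rcases Set.mem_insert_iff.mp hmem with hm | hm
      · simp only [Prod.mk.injEq] at hm
        exact hbnotB (hm.2 ▸ hd)
      · exact bufNoHead d (by simp [hd]) hh hm
    · intro hh hmem
      rcases Set.mem_insert_iff.mp hmem with hm | hm
      · simp only [Prod.mk.injEq] at hm; exact hbne hm.2.symm
      · exact rootNoHead hh hm
    · left; intro h0; exact hrb (by simp [h0])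
    · intro hh x hx l1 l2 hl
      simp only at hl
      rcases Set.mem_insert_iff.mp hx with hx | hx
      · simp only [Prod.mk.injEq] at hx
        obtain ⟨hx1, hx2⟩ := hx
        subst hx1; subst hx2
        cases l1 with
        | nil =>
          obtain ⟨_, hl2⟩ := List.cons.inj hl
          exact ⟨S, hl2.symm⟩
        | cons a l1' =>
          exfalso
          obtain ⟨hab, hl2⟩ := List.cons.inj hl
          exact hbnotS (hl2 ▸ (List.mem_append.mpr (Or.inr (by simp))))
      · cases l1 with
        | nil =>
          exfalso
          obtain ⟨hx1, _⟩ := List.cons.inj hl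
          exact bufNoHead x (by simp [hx1]) hh hx
        | cons a l1' =>
          obtain ⟨_, hl2⟩ := List.cons.inj hl
          exact db hh x hx l1' l2 hl2
    · intro d hd
      obtain ⟨a, ha, hp⟩ := good d hd
      exact ⟨a, hperm.mem_iff.mp ha, Relation.ReflTransGen.mono (p := fun x y => (x, y) ∈ insert (s, b) A) (fun x y hxy => Or.inr hxy) _ _ hp⟩
  | leftArc s S b B A hroot hhead =>
    obtain ⟨bound, sbBound, nodup, uniq, bufNoHead, rootNoHead, rootBuf, db, good⟩ := hI
    simp only at *
    have hsub : (S ++ b :: B).Sublist ((s :: S) ++ b :: B) := List.sublist_cons_self _ _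
    have hsnot : s ∉ S ++ b :: B := (List.nodup_cons.mp nodup).1
    refine ⟨?_, fun x hx => sbBound x (hsub.mem hx), nodup.sublist hsub, ?_, ?_, ?_, ?_, ?_, ?_⟩
    · rintro ⟨hh, dd⟩ he
      rcases Set.mem_insert_iff.mp he with he | he
      · simp only [Prod.mk.injEq] at he
        obtain ⟨rfl, rfl⟩ := he
        exact ⟨sbBound hh (by simp), sbBound dd (by simp)⟩
      · exact bound _ he
    · intro d hh hh' h1 h2
      rcases Set.mem_insert_iff.mp h1 with h1 | h1 <;>
        rcases Set.mem_insert_iff.mp h2 with h2 | h2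
      · simp only [Prod.mk.injEq] at h1 h2; omega
      · simp only [Prod.mk.injEq] at h1
        exact absurd (h1.2 ▸ h2) (hhead hh')
      · simp only [Prod.mk.injEq] at h2
        exact absurd (h2.2 ▸ h1) (hhead hh)
      · exact uniq d hh hh' h1 h2
    · intro d hd hh hmem
      rcases Set.mem_insert_iff.mp hmem with hm | hm
      · simp only [Prod.mk.injEq] at hm
        exact hsnot (hm.2 ▸ (by simp [hd] : d ∈ S ++ b :: B))
      · exact bufNoHead d hd hh hm
    · intro hh hmem
      rcases Set.mem_insert_iff.mp hmem with hm | hm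
      · simp only [Prod.mk.injEq] at hm; exact hroot hm.2.symm
      · exact rootNoHead hh hm
    · rcases rootBuf with hh | ⟨hS, _⟩
      · exact Or.inl hh
      · exact absurd hS (by simp)
    · intro hh x hx l1 l2 hl
      simp only at hl
      rcases Set.mem_insert_iff.mp hx with hx | hx
      · simp only [Prod.mk.injEq] at hx
        exfalso
        refine hsnot (List.mem_append.mpr (Or.inl ?_))
        rw [hl, ← hx.2]
        simp
      · exact db hh x hx (s :: l1) l2 (by rw [hl]; rfl)
    · intro d hd
      obtain ⟨a, ha, hp⟩ := good d hd
      have hp' : Relation.ReflTransGen (fun x y => (x, y) ∈ insert (b, s) A) a d :=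
        Relation.ReflTransGen.mono (p := fun x y => (x, y) ∈ insert (b, s) A) (fun x y hxy => Or.inr hxy) _ _ hp
      by_cases has : a = s
      · subst has
        exact ⟨b, by simp, Relation.ReflTransGen.head (Or.inl rfl) hp'⟩
      · refine ⟨a, ?_, hp'⟩
        rcases (List.mem_append.mp ha) with ha' | ha'
        · rcases List.mem_cons.mp ha' with h0 | h0
          · exact absurd h0 has
          · exact List.mem_append.mpr (Or.inl h0)
        · exact List.mem_append.mpr (Or.inr ha')
  | reduce s S B A hhead =>
    obtain ⟨bound, sbBound, nodup, uniq, bufNoHead, rootNoHead, rootBuf, db, good⟩ := hI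
    simp only at *
    obtain ⟨k, hk⟩ := hhead
    obtain ⟨l2', hl2'⟩ := db k s hk [] S (by simp)
    have hkS : k ∈ S := by rw [hl2']; simp
    have hsub : (S ++ B).Sublist ((s :: S) ++ B) := List.sublist_cons_self _ _
    have hsnot : s ∉ S ++ B := (List.nodup_cons.mp nodup).1
    refine ⟨bound, fun x hx => sbBound x (hsub.mem hx), nodup.sublist hsub, uniq,
      fun d hd => bufNoHead d hd, rootNoHead, ?_, ?_, ?_⟩
    · rcases rootBuf with hh | ⟨hS, _⟩
      · exact Or.inl hh
      · exact absurd hS (by simp)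
    · intro hh x hx l1 l2 hl
      simp only at hl
      exact db hh x hx (s :: l1) l2 (by rw [hl]; rfl)
    · intro d hd
      obtain ⟨a, ha, hp⟩ := good d hd
      by_cases has : a = s
      · subst has
        exact ⟨k, by simp [hkS], Relation.ReflTransGen.head hk hp⟩
      · refine ⟨a, ?_, hp⟩
        rcases (List.mem_append.mp ha) with ha' | ha'
        · rcases List.mem_cons.mp ha' with h0 | h0
          · exact absurd h0 has
          · exact List.mem_append.mpr (Or.inl h0)
        · exact List.mem_append.mpr (Or.inr ha')

lemma inv_init (n : ℕ) : AEInv n ⟨[], 0 :: (List.range n).map (· + 1), ∅⟩ := by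
  constructor
  · intro e he; exact absurd he (Set.notMem_empty e)
  · intro x hx
    simp only [List.nil_append, List.mem_cons, List.mem_map, List.mem_range] at hx
    rcases hx with rfl | ⟨i, hi, rfl⟩ <;> omega
  · simp only [List.nil_append]
    refine List.nodup_cons.mpr ⟨?_, ?_⟩
    · simp only [List.mem_map, List.mem_range]
      rintro ⟨i, _, h⟩; omega
    · exact (List.nodup_range : (List.range n).Nodup).map (fun a b hab => by omega)
  · intro d h h' hh _; exact absurd hh (Set.notMem_empty _)
  · intro d _ h hh; exact absurd hh (Set.notMem_empty _)
  · intro h hh; exact absurd hh (Set.notMem_empty _)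
  · exact Or.inr ⟨rfl, _, rfl⟩
  · intro h x hx; exact absurd hx (Set.notMem_empty _)
  · intro d hd
    refine ⟨d, ?_, Relation.ReflTransGen.refl⟩
    simp only [List.nil_append, List.mem_cons, List.mem_map, List.mem_range]
    rcases Nat.eq_zero_or_pos d with rfl | hpos
    · exact Or.inl rfl
    · exact Or.inr ⟨d - 1, by omega, by omega⟩

lemma inv_reach {n : ℕ} {c c' : Config} (hI : AEInv n c)
    (h : Relation.ReflTransGen Step c c') : AEInv n c' := by
  induction h with
  | refl => exact hI
  | tail _ hstep ih => exact inv_step ih hstep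

/-- If an arc-eager run from the initial configuration (with the artificial
root `0` at the buffer front, followed by words `1, …, n`) reaches a final
configuration (empty buffer, stack containing only the root), the constructed
arc set is a spanning arborescence on `{0, …, n}` rooted at `0`: it has `n`
arcs, every non-root word has exactly one head, the root has none, every word
is reachable from the root, and all arcs stay within the sentence. -/
theorem stmt18 (n : ℕ) (c : Config)
    (h : Relation.ReflTransGen Step
      ⟨[], 0 :: (List.range n).map (· + 1), ∅⟩ c)
    (hB : c.B = []) (hS : c.S = [0]) :
    c.A.ncard = n ∧
    (∀ d : ℕ, 1 ≤ d → d ≤ n → ∃! h', (h', d) ∈ c.A) ∧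
    (∀ h', (h', 0) ∉ c.A) ∧
    (∀ d : ℕ, 1 ≤ d → d ≤ n →
      Relation.ReflTransGen (fun x y => (x, y) ∈ c.A) 0 d) ∧
    (∀ e ∈ c.A, e.1 ≤ n ∧ e.2 ≤ n) := by
  have hI : AEInv n c := inv_reach (inv_init n) h
  have hsb : c.S ++ c.B = [0] := by rw [hB, hS]; rfl
  have hreach : ∀ d : ℕ, d ≤ n →
      Relation.ReflTransGen (fun x y => (x, y) ∈ c.A) 0 d := by
    intro d hd
    obtain ⟨a, ha, hp⟩ := hI.good d hd
    rw [hsb] at ha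
    simp only [List.mem_singleton] at ha
    exact ha ▸ hp
  have hexists : ∀ d : ℕ, 1 ≤ d → d ≤ n → ∃ h', (h', d) ∈ c.A := by
    intro d h1 h2
    rcases (hreach d h2).cases_tail with heq | ⟨e, _, he⟩
    · omega
    · exact ⟨e, he⟩
  refine ⟨?_, ?_, hI.rootNoHead, fun d _ h2 => hreach d h2, hI.bound⟩
  · -- cardinality
    have himg : Prod.snd '' c.A = Set.Icc 1 n := by
      ext d
      constructor
      · rintro ⟨⟨h', d'⟩, hmem, rfl⟩
        refine ⟨?_, (hI.bound _ hmem).2⟩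
        by_contra hlt
        have : d' = 0 := by omega
        exact hI.rootNoHead h' (this ▸ hmem)
      · rintro ⟨h1, h2⟩
        obtain ⟨h', hh'⟩ := hexists d h1 h2
        exact ⟨(h', d), hh', rfl⟩
    have hinj : Set.InjOn Prod.snd c.A := by
      rintro ⟨h1, d1⟩ hm1 ⟨h2, d2⟩ hm2 heq
      simp only at heq
      subst heq
      have := hI.uniq d1 h1 h2 hm1 hm2
      simp [this]
    calc c.A.ncard = (Prod.snd '' c.A).ncard := (Set.ncard_image_of_injOn hinj).symm
      _ = (Set.Icc 1 n).ncard := by rw [himg]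
      _ = n := by rw [← Finset.coe_Icc, Set.ncard_coe_finset, Nat.card_Icc]; omega
  · intro d h1 h2
    obtain ⟨h', hh'⟩ := hexists d h1 h2
    exact ⟨h', hh', fun y hy => hI.uniq d y h' hy hh'⟩
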